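/- (Validity of pruning.) Suppose Assumption A1 holds for g, and suppose the base set D satisfies Z*_{t',s} ⊆ D for every t' ≥ s. If Z_{t,s} = ∅ for some t ≥ s, then Z*_{t+h,s} = ∅ for every natural number h; that is, once the maintained living set of change s is empty, the change s is never again optimal for any mean value. -/
import Mathlib


/-- The functional cost of candidate change `s` at time `t`, evaluated at mean `μ`:
`f̃_{t,s}(μ) = F(s) + Σ_{i=s+1}^{t} (y i − μ)² + α − β·g(t−s)`. -/
noncomputable def ftilde (y F : ℕ → ℝ) (α β : ℝ) (g : ℕ → ℝ) (t s : ℕ) (μ : ℝ) : ℝ :=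
  F s + ∑ i ∈ Finset.Icc (s + 1) t, (y i - μ) ^ 2 + α - β * g (t - s)

/-- `I_{t,s,s'}`: the set of means on which change `s` beats change `s'` at time `t`. -/
def Iset (y F : ℕ → ℝ) (α β : ℝ) (g : ℕ → ℝ) (t s s' : ℕ) : Set ℝ :=
  {μ : ℝ | ftilde y F α β g t s μ ≤ ftilde y F α β g t s' μ}

/-- `I_{∞,s,s'}`: the limiting comparison set as `t → ∞`. -/
def Iinf (y F : ℕ → ℝ) (s s' : ℕ) : Set ℝ :=
  {μ : ℝ | F s - F s' + ∑ i ∈ Finset.Icc (s + 1) s', (y i - μ) ^ 2 ≤ 0}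

/-- `Z*_{t,s}`: the exact living set of change `s` at time `t` (ties between equal
costs are assigned to the older change). -/
noncomputable def Zstar (y F : ℕ → ℝ) (α β : ℝ) (g : ℕ → ℝ) (t s : ℕ) : Set ℝ :=
  {μ : ℝ | (∀ s'' : ℕ, s'' < s → ftilde y F α β g t s μ < ftilde y F α β g t s'' μ) ∧
           (∀ s' : ℕ, s < s' → s' ≤ t → ftilde y F α β g t s μ ≤ ftilde y F α β g t s' μ)}

lemma ftilde_sub (y F : ℕ → ℝ) (α β : ℝ) (g : ℕ → ℝ) {s s' t : ℕ}
    (h1 : s ≤ s') (h2 : s' ≤ t) (μ : ℝ) :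
    ftilde y F α β g t s μ - ftilde y F α β g t s' μ =
      (F s - F s' + ∑ i ∈ Finset.Icc (s + 1) s', (y i - μ) ^ 2) +
        β * (g (t - s') - g (t - s)) := by
  have hsplit : (∑ i ∈ Finset.Ioc s s', (y i - μ) ^ 2) +
      (∑ i ∈ Finset.Ioc s' t, (y i - μ) ^ 2) = ∑ i ∈ Finset.Ioc s t, (y i - μ) ^ 2 :=
    Finset.sum_Ioc_consecutive _ h1 h2
  simp only [ftilde, Finset.Icc_add_one_left_eq_Ioc]
  rw [← hsplit]
  ring

lemma gdiff_nonpos (g : ℕ → ℝ)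
    (hA1 : ∀ s s' : ℕ, s < s' →
      (∀ t₁ t₂ : ℕ, s' < t₁ → t₁ ≤ t₂ →
        g (t₁ - s') - g (t₁ - s) ≤ g (t₂ - s') - g (t₂ - s)) ∧
      Filter.Tendsto (fun t : ℕ => g (t - s') - g (t - s)) Filter.atTop (nhds 0))
    {s s' t : ℕ} (hss' : s < s') (hts : s' < t) :
    g (t - s') - g (t - s) ≤ 0 := by
  obtain ⟨hmono, hlim⟩ := hA1 s s' hss'
  refine ge_of_tendsto hlim ?_
  filter_upwards [Filter.eventually_ge_atTop t] with u hu
  exact hmono t u hts hu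

/-- Validity of pruning: under Assumption A1, if the base set `D`
contains every exact living set `Z*_{t',s}` for `t' ≥ s`, then for any choice of the
families `Future_{t,s}` and `Past_s`, with the recursively maintained set `Z_{t,s}` given by
`Z_{s,s} = D` and
`Z_{t+1,s} = (Z_{t,s} ∩ ⋂_{s' ∈ Future_{t,s}} I_{t+1,s,s'}) \ ⋃_{s'' ∈ Past_s} I_{∞,s'',s}`,
if `Z_{t,s} = ∅` for some `t ≥ s`, then `Z*_{t+h,s} = ∅` for every natural `h`. -/
theorem pruning_valid (y F : ℕ → ℝ) (α β : ℝ) (hβ : 0 ≤ β) (g : ℕ → ℝ)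
    (hA1 : ∀ s s' : ℕ, s < s' →
      (∀ t₁ t₂ : ℕ, s' < t₁ → t₁ ≤ t₂ →
        g (t₁ - s') - g (t₁ - s) ≤ g (t₂ - s') - g (t₂ - s)) ∧
      Filter.Tendsto (fun t : ℕ => g (t - s') - g (t - s)) Filter.atTop (nhds 0))
    (s : ℕ) (D : Set ℝ) (hD : ∀ t' : ℕ, s ≤ t' → Zstar y F α β g t' s ⊆ D)
    (Future : ℕ → Set ℕ) (hFuture : ∀ t : ℕ, s ≤ t → Future t ⊆ Set.Icc (s + 1) t)
    (Past : Set ℕ) (hPast : Past ⊆ Set.Iio s)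
    (Z : ℕ → Set ℝ) (hZs : Z s = D)
    (hZrec : ∀ t : ℕ, s ≤ t →
      Z (t + 1) =
        (Z t ∩ ⋂ s' ∈ Future t, Iset y F α β g (t + 1) s s') \
          ⋃ s'' ∈ Past, Iinf y F s'' s) :
    ∀ t : ℕ, s ≤ t → Z t = ∅ → ∀ h : ℕ, Zstar y F α β g (t + h) s = ∅ := by
  intro t hst hZt h
  have main : ∀ u : ℕ, s ≤ u → ∀ t' : ℕ, u ≤ t' → Zstar y F α β g t' s ⊆ Z u := by
    intro u hsu
    induction u, hsu using Nat.le_induction with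
    | base =>
      intro t' ht'
      rw [hZs]
      exact hD t' ht'
    | succ n hn ih =>
      intro t' ht' μ hμ
      have hnt' : n ≤ t' := Nat.le_of_succ_le ht'
      rw [hZrec n hn]
      refine ⟨⟨ih t' hnt' hμ, ?_⟩, ?_⟩
      · simp only [Set.mem_iInter]
        intro s' hs'
        obtain ⟨hs1, hs2⟩ := hFuture n hn hs'
        have hss' : s < s' := Nat.lt_of_succ_le hs1
        have hle : ftilde y F α β g t' s μ ≤ ftilde y F α β g t' s' μ :=
          hμ.2 s' hss' (le_trans hs2 hnt')
        have hd1 := ftilde_sub y F α β g (le_of_lt hss') (le_trans hs2 (Nat.le_succ n)) μ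
        have hd2 := ftilde_sub y F α β g (le_of_lt hss') (le_trans hs2 hnt') μ
        have hmono := (hA1 s s' hss').1 (n + 1) t' (Nat.lt_succ_of_le hs2) ht'
        have hβm : β * (g (n + 1 - s') - g (n + 1 - s)) ≤
            β * (g (t' - s') - g (t' - s)) := mul_le_mul_of_nonneg_left hmono hβ
        show ftilde y F α β g (n + 1) s μ ≤ ftilde y F α β g (n + 1) s' μ
        have : ftilde y F α β g (n + 1) s μ - ftilde y F α β g (n + 1) s' μ ≤
            ftilde y F α β g t' s μ - ftilde y F α β g t' s' μ := by
          rw [hd1, hd2]; linarith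
        linarith
      · simp only [Set.mem_iUnion, not_exists]
        intro s'' hs''
        have hs''s : s'' < s := hPast hs''
        intro hmem
        have hIinf : F s'' - F s + ∑ i ∈ Finset.Icc (s'' + 1) s, (y i - μ) ^ 2 ≤ 0 := hmem
        have hlt : ftilde y F α β g t' s μ < ftilde y F α β g t' s'' μ := hμ.1 s'' hs''s
        have hst' : s < t' := lt_of_lt_of_le (Nat.lt_succ_of_le hn) ht'
        have hd := ftilde_sub y F α β g (le_of_lt hs''s) (le_of_lt hst') μ
        have hg : g (t' - s) - g (t' - s'') ≤ 0 := gdiff_nonpos g hA1 hs''s hst'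
        have hβg : β * (g (t' - s) - g (t' - s'')) ≤ 0 :=
          mul_nonpos_of_nonneg_of_nonpos hβ hg
        have : ftilde y F α β g t' s'' μ - ftilde y F α β g t' s μ ≤ 0 := by
          rw [hd]; linarith
        linarith
  have hsub : Zstar y F α β g (t + h) s ⊆ Z t := main t hst (t + h) (Nat.le_add_right t h)
  rw [hZt] at hsub
  exact Set.subset_empty_iff.mp hsub
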